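/- With the recursively defined control limits, for every 0 ≤ n ≤ N: E( ∑_{m=n+1}^{N} 1{B_{m,n+1}}·(c·v_{m+1} - Y_m) | F_n ) = E( [l_{n+1} - Y_{n+1}]^+ | F_n ) almost surely, where B_{m,n+1} = {Y_k < l_k for all n+1 ≤ k ≤ m} and l_{N+1} = 0. -/

import Mathlib

open MeasureTheory Finset

private lemma Icc_insert_left' {a b : ℕ} (h : a ≤ b) :
    Finset.Icc a b = insert a (Finset.Icc (a + 1) b) := by
  ext x; simp only [Finset.mem_Icc, Finset.mem_insert]; omega

/-- With the recursively defined control limits, for every `0 ≤ n ≤ N`: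
`E(∑_{m=n+1}^{N} 1{B_{m,n+1}}·(c·v_{m+1} - Y_m) | F_n) = E([l_{n+1} - Y_{n+1}]⁺ | F_n)` a.s.,
where `B_{m,n+1} = {Y_k < l_k for all n+1 ≤ k ≤ m}` and `l_{N+1} = 0`. -/
theorem indicator_sum_condexp_eq_pos_part_condexp
    {Ω : Type*} {m0 : MeasurableSpace Ω} (μ : Measure Ω) [IsProbabilityMeasure μ]
    (N : ℕ) (ℱ : ℕ → MeasurableSpace Ω) (hmono : Monotone ℱ) (hle : ∀ n, ℱ n ≤ m0)
    (Y v : ℕ → Ω → ℝ)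
    (hYnn : ∀ n ω, 0 ≤ Y n ω) (hYint : ∀ n, Integrable (Y n) μ)
    (hYmeas : ∀ n, Measurable[ℱ n] (Y n))
    (hvnn : ∀ n ω, 0 ≤ v n ω) (hvint : ∀ n, Integrable (v n) μ)
    (hvmeas : ∀ k, Measurable[ℱ (k - 1)] (v k))
    (c : ℝ) (hc : 0 < c) (l : ℕ → Ω → ℝ)
    (hlN1 : l (N + 1) = fun _ => 0)
    (hlN : l N = fun ω => c * v (N + 1) ω)
    (hlrec : ∀ n < N, l n =ᵐ[μ] fun ω =>
      c * v (n + 1) ω + (μ[fun ω' => max (l (n + 1) ω' - Y (n + 1) ω') 0 | ℱ n]) ω) :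
    ∀ n ≤ N,
      (μ[fun ω => ∑ m ∈ Finset.Icc (n + 1) N,
          (Set.indicator {ω' | ∀ k ∈ Finset.Icc (n + 1) m, Y k ω' < l k ω'}
            (fun _ => (1 : ℝ)) ω) * (c * v (m + 1) ω - Y m ω) | ℱ n])
        =ᵐ[μ] (μ[fun ω => max (l (n + 1) ω - Y (n + 1) ω) 0 | ℱ n]) := by
  classical
  -- measurable version of `l`
  obtain ⟨L, hLdef⟩ : ∃ L : ℕ → Ω → ℝ, L = fun k =>
      if k < N then
        (fun ω => c * v (k + 1) ω + (μ[fun ω' => max (l (k + 1) ω' - Y (k + 1) ω') 0 | ℱ k]) ω)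
      else l k := ⟨_, rfl⟩
  have hLl : ∀ k, l k =ᵐ[μ] L k := by
    intro k
    by_cases hk : k < N
    · simpa [hLdef, hk] using hlrec k hk
    · simp [hLdef, hk]
  have hLmeas : ∀ k ≤ N + 1, StronglyMeasurable[ℱ k] (L k) := by
    intro k hk
    rcases lt_trichotomy k N with h | h | h
    · rw [hLdef]; simp only [if_pos h]
      exact ((stronglyMeasurable_const.mul (hvmeas (k + 1)).stronglyMeasurable).add
        stronglyMeasurable_condExp)
    · simp only [h, hLdef, if_neg (lt_irrefl N), hlN]
      exact stronglyMeasurable_const.mul (by subst h; have := (hvmeas (k + 1)).stronglyMeasurable; simpa only [Nat.add_sub_cancel] using this)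
    · have hk1 : k = N + 1 := by omega
      subst hk1
      rw [hLdef]; simp only [if_neg (by omega : ¬ N + 1 < N), hlN1]
      exact stronglyMeasurable_const
  have hLN1 : L (N + 1) = fun _ => (0 : ℝ) := by
    rw [hLdef]; simp only [if_neg (by omega : ¬ N + 1 < N), hlN1]
  -- measurable indicator sets
  obtain ⟨A, hAdef⟩ : ∃ A : ℕ → ℕ → Set Ω,
      A = fun n m => {ω | ∀ k ∈ Finset.Icc (n + 1) m, Y k ω < L k ω} := ⟨_, rfl⟩
  have hAmeas : ∀ n m, m ≤ N + 1 → MeasurableSet[ℱ m] (A n m) := by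
    intro n m hm
    have : A n m = ⋂ k ∈ (Finset.Icc (n + 1) m : Finset ℕ), {ω | Y k ω < L k ω} := by
      rw [hAdef]; ext ω; simp
    rw [this]
    refine MeasurableSet.biInter (Set.to_countable _) fun k hk => ?_
    have hkm : k ≤ m := (Finset.mem_Icc.mp hk).2
    exact hmono hkm _ (measurableSet_lt (hYmeas k) (hLmeas k (by omega)).measurable)
  -- membership factorization
  have hmemA : ∀ n m ω, n + 1 ≤ m →
      (ω ∈ A n m ↔ ω ∈ A n (n + 1) ∧ ω ∈ A (n + 1) m) := by
    intro n m ω h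
    simp only [hAdef, Set.mem_setOf_eq, Finset.mem_Icc]
    constructor
    · intro hh
      exact ⟨fun k hk => hh k (by omega), fun k hk => hh k (by omega)⟩
    · rintro ⟨h1, h2⟩ k hk
      by_cases hkk : k ≤ n + 1
      · exact h1 k (by omega)
      · exact h2 k (by omega)
  have hfact : ∀ n m ω, n + 1 ≤ m →
      (A n m).indicator (fun _ => (1 : ℝ)) ω =
        (A n (n + 1)).indicator (fun _ => (1 : ℝ)) ω *
          (A (n + 1) m).indicator (fun _ => (1 : ℝ)) ω := by
    intro n m ω h
    by_cases h1 : ω ∈ A n (n + 1) <;> by_cases h2 : ω ∈ A (n + 1) m <;>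
      simp [Set.indicator_apply, hmemA n m ω h, h1, h2]
  -- the L-version of the sum
  obtain ⟨G, hGdef⟩ : ∃ G : ℕ → Ω → ℝ, G = fun n ω =>
      ∑ m ∈ Finset.Icc (n + 1) N,
        (A n m).indicator (fun _ => (1 : ℝ)) ω * (c * v (m + 1) ω - Y m ω) := ⟨_, rfl⟩
  have hindmul : ∀ (s : Set Ω) (g : Ω → ℝ),
      (fun ω => s.indicator (fun _ => (1 : ℝ)) ω * g ω) = s.indicator g := by
    intro s g; funext ω
    by_cases h : ω ∈ s <;> simp [Set.indicator_apply, h]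
  have hGint : ∀ n, Integrable (G n) μ := by
    intro n
    rw [hGdef]
    refine integrable_finset_sum _ fun m hm => ?_
    have hm' : m ≤ N := (Finset.mem_Icc.mp hm).2
    rw [hindmul]
    exact (((hvint (m + 1)).const_mul c).sub (hYint m)).indicator
      (hle m _ (hAmeas n m (by omega)))
  -- main claim, by downward induction
  have key : ∀ d n, n + d = N → μ[G n | ℱ n]
      =ᵐ[μ] μ[fun ω => max (L (n + 1) ω - Y (n + 1) ω) 0 | ℱ n] := by
    intro d
    induction d with
    | zero =>
      intro n hn
      have hn' : n = N := by omega
      have h1 : G n = fun _ => (0 : ℝ) := by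
        funext ω
        simp only [hGdef]
        rw [Finset.Icc_eq_empty (by omega)]
        simp
      have h2 : (fun ω => max (L (n + 1) ω - Y (n + 1) ω) 0) = fun _ => (0 : ℝ) := by
        funext ω
        have hz : L (n + 1) ω = 0 := by rw [hn', hLN1]
        rw [hz]
        exact max_eq_right (by linarith [hYnn (n + 1) ω])
      rw [h1, h2]
    | succ d ih =>
      intro n hn
      have hnN : n < N := by omega
      have ih' := ih (n + 1) (by omega)
      set I : Ω → ℝ := (A n (n + 1)).indicator (fun _ => (1 : ℝ)) with hIdef
      -- split the sum
      have hsplit : G n = fun ω =>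
          I ω * (c * v (n + 2) ω - Y (n + 1) ω) + I ω * G (n + 1) ω := by
        funext ω
        simp only [hGdef]
        rw [Icc_insert_left' (show n + 1 ≤ N by omega),
          Finset.sum_insert (by simp [Finset.mem_Icc])]
        congr 1
        rw [Finset.mul_sum]
        refine Finset.sum_congr rfl fun m hm => ?_
        have hm' : n + 1 ≤ m := by have := (Finset.mem_Icc.mp hm).1; omega
        rw [hfact n m ω hm']
        ring
      have hI_sm : StronglyMeasurable[ℱ (n + 1)] I :=
        stronglyMeasurable_const.indicator (hAmeas n (n + 1) (by omega))
      have hf1int : Integrable (fun ω => I ω * (c * v (n + 2) ω - Y (n + 1) ω)) μ := by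
        rw [hIdef, hindmul]
        exact (((hvint (n + 2)).const_mul c).sub (hYint (n + 1))).indicator
          (hle (n + 1) _ (hAmeas n (n + 1) (by omega)))
      have hf2int : Integrable (fun ω => I ω * G (n + 1) ω) μ := by
        rw [hIdef, hindmul]
        exact (hGint (n + 1)).indicator (hle (n + 1) _ (hAmeas n (n + 1) (by omega)))
      have hf1sm : StronglyMeasurable[ℱ (n + 1)]
          (fun ω => I ω * (c * v (n + 2) ω - Y (n + 1) ω)) :=
        hI_sm.mul ((stronglyMeasurable_const.mul (hvmeas (n + 2)).stronglyMeasurable).sub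
          (hYmeas (n + 1)).stronglyMeasurable)
      -- conditional expectation given ℱ (n+1)
      have hstep : μ[G n | ℱ (n + 1)] =ᵐ[μ] fun ω =>
          I ω * (c * v (n + 2) ω - Y (n + 1) ω) +
            I ω * (μ[fun ω' => max (L (n + 2) ω' - Y (n + 2) ω') 0 | ℱ (n + 1)]) ω := by
        rw [hsplit]
        have hadd := condExp_add (m := ℱ (n + 1)) hf1int hf2int
        refine hadd.trans ?_
        have he1 : μ[(fun ω => I ω * (c * v (n + 2) ω - Y (n + 1) ω)) | ℱ (n + 1)] =
            fun ω => I ω * (c * v (n + 2) ω - Y (n + 1) ω) :=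
          condExp_of_stronglyMeasurable (hle (n + 1)) hf1sm hf1int
        have he2 : μ[(fun ω => I ω * G (n + 1) ω) | ℱ (n + 1)] =ᵐ[μ]
            I * μ[G (n + 1) | ℱ (n + 1)] :=
          condExp_mul_of_stronglyMeasurable_left hI_sm hf2int (hGint (n + 1))
        rw [he1]
        filter_upwards [he2, ih'] with ω h2 hih
        simp only [Pi.add_apply, Pi.mul_apply] at *
        rw [h2, hih]
      -- identify the result with the positive part
      have hfinal : (fun ω =>
          I ω * (c * v (n + 2) ω - Y (n + 1) ω) +
            I ω * (μ[fun ω' => max (L (n + 2) ω' - Y (n + 2) ω') 0 | ℱ (n + 1)]) ω)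
          =ᵐ[μ] fun ω => max (L (n + 1) ω - Y (n + 1) ω) 0 := by
        have hIiff : ∀ ω, ω ∈ A n (n + 1) ↔ Y (n + 1) ω < L (n + 1) ω := by
          intro ω
          rw [hAdef]
          simp only [Set.mem_setOf_eq, Finset.mem_Icc]
          constructor
          · intro h; exact h (n + 1) ⟨le_refl _, le_refl _⟩
          · intro h k hk; have : k = n + 1 := by omega
            subst this; exact h
        have hptwise : ∀ ω E, L (n + 1) ω = c * v (n + 2) ω + E →
            I ω * (c * v (n + 2) ω - Y (n + 1) ω) + I ω * E
              = max (L (n + 1) ω - Y (n + 1) ω) 0 := by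
          intro ω E hE
          by_cases h : Y (n + 1) ω < L (n + 1) ω
          · have hmem : ω ∈ A n (n + 1) := (hIiff ω).mpr h
            rw [hIdef]
            simp only [Set.indicator_of_mem hmem]
            rw [max_eq_left (by linarith)]
            linarith
          · have hmem : ω ∉ A n (n + 1) := fun hh => h ((hIiff ω).mp hh)
            rw [hIdef]
            simp only [Set.indicator_of_notMem hmem]
            rw [max_eq_right (by push_neg at h; linarith)]
            ring
        by_cases hcase : n + 1 < N
        · have hL : L (n + 1) = fun ω => c * v (n + 2) ω +
              (μ[fun ω' => max (l (n + 2) ω' - Y (n + 2) ω') 0 | ℱ (n + 1)]) ω := by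
            rw [hLdef]; simp only [if_pos hcase]
          have hcc : μ[fun ω' => max (l (n + 2) ω' - Y (n + 2) ω') 0 | ℱ (n + 1)]
              =ᵐ[μ] μ[fun ω' => max (L (n + 2) ω' - Y (n + 2) ω') 0 | ℱ (n + 1)] :=
            condExp_congr_ae (by filter_upwards [hLl (n + 2)] with ω h; rw [h])
          filter_upwards [hcc] with ω hω
          refine hptwise ω _ ?_
          rw [hL]
          simp only
          rw [hω]
        · have hNeq : n + 1 = N := by omega
          have hL : L (n + 1) = fun ω => c * v (n + 2) ω := by
            rw [hLdef]
            simp only [if_neg (by omega : ¬ n + 1 < N)]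
            rw [hNeq, hlN, show N + 1 = n + 2 by omega]
          have hE0 : (fun ω' => max (L (n + 2) ω' - Y (n + 2) ω') 0) = fun _ => (0 : ℝ) := by
            funext ω'
            have hz : L (n + 2) ω' = 0 := by
              rw [show n + 2 = N + 1 by omega, hLN1]
            rw [hz]
            exact max_eq_right (by linarith [hYnn (n + 2) ω'])
          have hEzero : μ[fun ω' => max (L (n + 2) ω' - Y (n + 2) ω') 0 | ℱ (n + 1)] = 0 := by
            rw [hE0]
            exact condExp_zero
          filter_upwards with ω
          refine hptwise ω _ ?_
          rw [hL, hEzero]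
          simp
      -- assemble
      calc μ[G n | ℱ n]
          =ᵐ[μ] μ[μ[G n | ℱ (n + 1)] | ℱ n] :=
            (condExp_condExp_of_le (hmono (Nat.le_succ n)) (hle (n + 1))).symm
        _ =ᵐ[μ] μ[fun ω => max (L (n + 1) ω - Y (n + 1) ω) 0 | ℱ n] :=
            condExp_congr_ae (hstep.trans hfinal)
  -- transfer back to `l`
  intro n hn
  have hae : ∀ᵐ ω ∂μ, ∀ k, l k ω = L k ω := ae_all_iff.mpr fun k => hLl k
  have h1 : (fun ω => ∑ m ∈ Finset.Icc (n + 1) N,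
      (Set.indicator {ω' | ∀ k ∈ Finset.Icc (n + 1) m, Y k ω' < l k ω'}
        (fun _ => (1 : ℝ)) ω) * (c * v (m + 1) ω - Y m ω)) =ᵐ[μ] G n := by
    filter_upwards [hae] with ω hω
    rw [hGdef]
    refine Finset.sum_congr rfl fun m hm => ?_
    congr 1
    have hset : ω ∈ {ω' | ∀ k ∈ Finset.Icc (n + 1) m, Y k ω' < l k ω'} ↔ ω ∈ A n m := by
      rw [hAdef]
      simp only [Set.mem_setOf_eq]
      constructor
      · intro h k hk; rw [← hω k]; exact h k hk
      · intro h k hk; rw [hω k]; exact h k hk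
    simp only [Set.indicator_apply]
    exact if_congr hset rfl rfl
  have h2 : (fun ω => max (l (n + 1) ω - Y (n + 1) ω) 0)
      =ᵐ[μ] (fun ω => max (L (n + 1) ω - Y (n + 1) ω) 0) := by
    filter_upwards [hLl (n + 1)] with ω hω
    rw [hω]
  calc μ[fun ω => ∑ m ∈ Finset.Icc (n + 1) N,
      (Set.indicator {ω' | ∀ k ∈ Finset.Icc (n + 1) m, Y k ω' < l k ω'}
        (fun _ => (1 : ℝ)) ω) * (c * v (m + 1) ω - Y m ω) | ℱ n]
      =ᵐ[μ] μ[G n | ℱ n] := condExp_congr_ae h1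
    _ =ᵐ[μ] μ[fun ω => max (L (n + 1) ω - Y (n + 1) ω) 0 | ℱ n] := key (N - n) n (by omega)
    _ =ᵐ[μ] μ[fun ω => max (l (n + 1) ω - Y (n + 1) ω) 0 | ℱ n] := condExp_congr_ae h2.symm
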